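/- Let G be a locally compact group with Haar measure, U a compact subgroup, and β a symmetric bi-U-invariant finite Borel measure on G. Let τ be an irreducible unitary representation of G on a Hilbert space ℋ whose subspace ℋ^U of U-invariant vectors is at most one-dimensional. Then the operator norm of τ(β) equals 0 if ℋ^U = 0, and equals |β(η_τ)| where η_τ(g) = ⟨τ(g)w, w⟩ for a unit vector w ∈ ℋ^U otherwise. -/

import Mathlib

open MeasureTheory

/-- Operator norm of `τ(β)` for a symmetric bi-`U`-invariant finite measure `β` and an
irreducible unitary representation `τ` with at most one-dimensional space of
`U`-invariant vectors: it is `0` if there are no nonzero `U`-invariant vectors, and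
equals `|β(η_τ)|` otherwise, where `η_τ` is the spherical matrix coefficient. -/
theorem stmt_1 {G : Type*} [Group G] [TopologicalSpace G] [IsTopologicalGroup G]
    [MeasurableSpace G] [BorelSpace G]
    {H : Type*} [NormedAddCommGroup H] [InnerProductSpace ℂ H] [CompleteSpace H]
    (U : Subgroup G) (hU : IsCompact (U : Set G))
    (β : Measure G) [IsFiniteMeasure β]
    (hsymm : Measure.map (fun g => g⁻¹) β = β)
    (hleft : ∀ u ∈ U, Measure.map (fun g => u * g) β = β)
    (hright : ∀ u ∈ U, Measure.map (fun g => g * u) β = β)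
    (τ : G →* (H →L[ℂ] H))
    (hunitary : ∀ (g : G) (w v : H), (inner ℂ (τ g w) (τ g v) : ℂ) = inner ℂ w v)
    (hcont : ∀ w v : H, Continuous fun g => (inner ℂ (τ g w) v : ℂ))
    (hirred : ∀ K : Submodule ℂ H, IsClosed (K : Set H) →
      (∀ g : G, ∀ x ∈ K, τ g x ∈ K) → K = ⊥ ∨ K = ⊤)
    (hmult1 : ∀ w w' : H, (∀ u ∈ U, τ u w = w) → (∀ u ∈ U, τ u w' = w') →
      ∃ c : ℂ, w' = c • w ∨ w = c • w')
    (T : H →L[ℂ] H)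
    (hT : ∀ w v : H, (inner ℂ (T w) v : ℂ) = ∫ g, (inner ℂ (τ g w) v : ℂ) ∂β) :
    ((∀ w : H, (∀ u ∈ U, τ u w = w) → w = 0) → ‖T‖ = 0) ∧
    (∀ w : H, (∀ u ∈ U, τ u w = w) → ‖w‖ = 1 →
      ‖T‖ = ‖∫ g, (inner ℂ (τ g w) w : ℂ) ∂β‖) := by
  -- τ g (τ g⁻¹ x) = x and τ g⁻¹ (τ g x) = x
  have hcancel : ∀ (g : G) (x : H), τ g (τ g⁻¹ x) = x := by
    intro g x
    have : τ g (τ g⁻¹ x) = (τ g * τ g⁻¹) x := rfl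
    rw [this, ← map_mul, mul_inv_cancel, map_one, ContinuousLinearMap.one_apply]
  have hcancel' : ∀ (g : G) (x : H), τ g⁻¹ (τ g x) = x := by
    intro g x
    have : τ g⁻¹ (τ g x) = (τ g⁻¹ * τ g) x := rfl
    rw [this, ← map_mul, inv_mul_cancel, map_one, ContinuousLinearMap.one_apply]
  -- left-translation change of variables
  have key_left : ∀ u ∈ U, ∀ v x : H,
      ∫ g, (inner ℂ (τ g v) x : ℂ) ∂β = ∫ g, (inner ℂ (τ (u * g) v) x : ℂ) ∂β := by
    intro u hu v x
    have h := integral_map (μ := β) (φ := fun g => u * g)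
      (f := fun g => (inner ℂ (τ g v) x : ℂ)) (measurable_const_mul u).aemeasurable
      (hcont v x).aestronglyMeasurable
    rwa [hleft u hu] at h
  -- inversion change of variables
  have key_inv : ∀ v x : H,
      ∫ g, (inner ℂ (τ g v) x : ℂ) ∂β = ∫ g, (inner ℂ (τ g⁻¹ v) x : ℂ) ∂β := by
    intro v x
    have h := integral_map (μ := β) (φ := fun g => g⁻¹)
      (f := fun g => (inner ℂ (τ g v) x : ℂ)) measurable_inv.aemeasurable
      (hcont v x).aestronglyMeasurable
    rwa [hsymm] at h
  -- inverse and inner ℂ product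
  have hinv_inner : ∀ (g : G) (v x : H), (inner ℂ (τ g⁻¹ v) x : ℂ) = inner ℂ v (τ g x) := by
    intro g v x
    have := hunitary g (τ g⁻¹ v) x
    rw [hcancel] at this
    exact this.symm
  -- T is self-adjoint
  have selfadj : ∀ v x : H, (inner ℂ (T v) x : ℂ) = inner ℂ v (T x) := by
    intro v x
    rw [hT, key_inv]
    simp_rw [hinv_inner]
    have : ∀ g : G, (inner ℂ v (τ g x) : ℂ) = (starRingEnd ℂ) (inner ℂ (τ g x) v) := by
      intro g; rw [inner_conj_symm]
    simp_rw [this]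
    rw [integral_conj, ← hT, inner_conj_symm]
  -- T v is U-invariant
  have hTinv : ∀ (v : H), ∀ u ∈ U, τ u (T v) = T v := by
    intro v u hu
    apply ext_inner_right ℂ
    intro x
    have h1 : (inner ℂ (τ u (T v)) x : ℂ) = inner ℂ (T v) ((τ u⁻¹) x) := by
      have := hunitary u (T v) (τ u⁻¹ x)
      rwa [hcancel] at this
    rw [h1, hT]
    have h2 : ∀ g : G, (inner ℂ (τ g v) (τ u⁻¹ x) : ℂ) = inner ℂ (τ (u * g) v) x := by
      intro g
      have := hunitary u (τ g v) (τ u⁻¹ x)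
      rw [hcancel] at this
      have happ : τ (u * g) v = τ u (τ g v) := by rw [map_mul]; rfl
      rw [← this, happ]
    simp_rw [h2]
    rw [← key_left u hu v x, ← hT]
  constructor
  · intro h
    have : T = 0 := by
      ext v
      exact h (T v) (hTinv v)
    rw [this]
    simp
  · intro w hw hw1
    have hww : (inner ℂ w w : ℂ) = 1 := by
      rw [inner_self_eq_norm_sq_to_K, hw1]
      norm_num
    set c : ℂ := ∫ g, (inner ℂ (τ g w) w : ℂ) ∂β with hc
    have hTww : (inner ℂ (T w) w : ℂ) = c := (hT w w)
    -- every T v is a multiple of w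
    have hspan : ∀ v : H, T v = (inner ℂ w (T v) : ℂ) • w := by
      intro v
      obtain ⟨d, hd⟩ := hmult1 w (T v) hw (hTinv v)
      rcases hd with hd | hd
      · rw [hd, inner_smul_right, hww, mul_one]
      · by_cases hd0 : d = 0
        · rw [hd0, zero_smul] at hd
          exfalso
          rw [hd] at hw1
          simp at hw1
        · have hTv : T v = d⁻¹ • w := by
            rw [hd, smul_smul, inv_mul_cancel₀ hd0, one_smul]
          rw [hTv, inner_smul_right, hww, mul_one]
    have hTw : T w = c • w := by
      rw [hspan w, ← selfadj, hTww]
    have hcnorm : ‖T w‖ = ‖c‖ := by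
      rw [hTw, norm_smul, hw1, mul_one]
    apply le_antisymm
    · apply ContinuousLinearMap.opNorm_le_bound _ (norm_nonneg c)
      intro v
      rw [hspan v, norm_smul, hw1, mul_one]
      have h1 : ‖(inner ℂ w (T v) : ℂ)‖ = ‖(inner ℂ (T v) w : ℂ)‖ := norm_inner_symm _ _
      rw [h1, selfadj, hTw, inner_smul_right, norm_mul]
      calc ‖c‖ * ‖(inner ℂ v w : ℂ)‖ ≤ ‖c‖ * (‖v‖ * ‖w‖) := by
            apply mul_le_mul_of_nonneg_left (norm_inner_le_norm v w) (norm_nonneg c)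
        _ = ‖c‖ * ‖v‖ := by rw [hw1, mul_one]
    · calc ‖c‖ = ‖T w‖ := hcnorm.symm
        _ ≤ ‖T‖ * ‖w‖ := T.le_opNorm w
        _ = ‖T‖ := by rw [hw1, mul_one]
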